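/- Let N be a pure Nash equilibrium of the game induced by BCOORD with parameter p ≥ 1 and O any assignment. Then (∑_j L(N_j)^{p+1})^{1/(p+1)} ≤ ((2p+1)/ln(p+1)) · m^{1/(p+1)} · max_j L(O_j). -/

import Mathlib

/-- The minimum load of job `i` over all machines. -/
noncomputable def wmin {n m : ℕ} (w : Fin n → Fin m → ℝ) (i : Fin n) : ℝ :=
  sInf (Set.range (w i))

/-- The inefficiency of job `i` on machine `j`. -/
noncomputable def rho {n m : ℕ} (w : Fin n → Fin m → ℝ) (i : Fin n) (j : Fin m) : ℝ :=
  w i j / wmin w i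

/-- The load of machine `j` under assignment `N`. -/
noncomputable def load {n m : ℕ} (w : Fin n → Fin m → ℝ) (N : Fin n → Fin m) (j : Fin m) : ℝ :=
  ∑ i ∈ Finset.univ.filter (fun i => N i = j), w i j

/-- The completion time of job `i` under assignment `N` with the BCOORD mechanism. -/
noncomputable def Bcost {n m : ℕ} (p : ℕ) (w : Fin n → Fin m → ℝ)
    (N : Fin n → Fin m) (i : Fin n) : ℝ :=
  rho w i (N i) ^ ((1 : ℝ) / p) * load w N (N i)

/-- `N` is a pure Nash equilibrium of the game induced by BCOORD. -/
def isNashB {n m : ℕ} (p : ℕ) (w : Fin n → Fin m → ℝ) (N : Fin n → Fin m) : Prop :=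
  ∀ (i : Fin n) (j : Fin m), Bcost p w N i ≤ Bcost p w (Function.update N i j) i

section helpers

variable {n m : ℕ} {w : Fin n → Fin m → ℝ}

lemma wmin_pos (hm : 0 < m) (hw : ∀ i j, 0 < w i j) (i : Fin n) : 0 < wmin w i := by
  have hne : (Set.range (w i)).Nonempty := ⟨w i ⟨0, hm⟩, ⟨0, hm⟩, rfl⟩
  obtain ⟨j, hj⟩ := hne.csInf_mem (Set.finite_range _)
  rw [wmin, ← hj]
  exact hw i j

lemma rho_nonneg (hm : 0 < m) (hw : ∀ i j, 0 < w i j) (i : Fin n) (j : Fin m) :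
    0 ≤ rho w i j :=
  div_nonneg (hw i j).le (wmin_pos hm hw i).le

lemma load_nonneg (hw : ∀ i j, 0 < w i j) (N : Fin n → Fin m) (j : Fin m) :
    0 ≤ load w N j :=
  Finset.sum_nonneg fun i _ => (hw i j).le

lemma load_update (N : Fin n → Fin m) {i : Fin n} {j : Fin m} (h : N i ≠ j) :
    load w (Function.update N i j) j = load w N j + w i j := by
  unfold load
  have hfil : (Finset.univ.filter (fun i' => Function.update N i j i' = j))
      = insert i (Finset.univ.filter fun i' => N i' = j) := by
    ext i'
    by_cases h' : i' = i <;> simp [h', Function.update_apply]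
  rw [hfil, Finset.sum_insert (by simp [h])]
  ring

/-- Key per-job inequality from the Nash condition. -/
lemma key_job (p : ℕ) (hp : 1 ≤ p) (hm : 0 < m) (hw : ∀ i j, 0 < w i j)
    {N : Fin n → Fin m} (hN : isNashB p w N) (i : Fin n) (j : Fin m) :
    w i (N i) * load w N (N i) ^ p ≤ w i j * (load w N j + w i j) ^ p := by
  have hL := load_nonneg hw N
  by_cases hj : N i = j
  · subst hj
    exact mul_le_mul_of_nonneg_left
      (pow_le_pow_left₀ (hL (N i)) (by linarith [hw i (N i)]) p) (hw i (N i)).le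
  · have h1 := hN i j
    rw [Bcost, Bcost, Function.update_self, load_update N hj] at h1
    -- raise to the p-th power
    have hpne : ((p : ℝ)) ≠ 0 := by positivity
    have hrn : ∀ j', ((rho w i j' ^ ((1:ℝ)/p)) : ℝ) ^ p = rho w i j' := by
      intro j'
      rw [← Real.rpow_natCast (rho w i j' ^ ((1:ℝ)/p)) p,
        ← Real.rpow_mul (rho_nonneg hm hw i j'), one_div, inv_mul_cancel₀ hpne,
        Real.rpow_one]
    have hbn : 0 ≤ rho w i (N i) ^ ((1:ℝ)/p) * load w N (N i) := by
      exact mul_nonneg (Real.rpow_nonneg (rho_nonneg hm hw i (N i)) _) (hL _)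
    have h2 := pow_le_pow_left₀ hbn h1 p
    rw [mul_pow, mul_pow, hrn, hrn] at h2
    -- multiply by wmin w i
    have hwm := wmin_pos hm hw i
    have h3 := mul_le_mul_of_nonneg_left h2 hwm.le
    rw [← mul_assoc, ← mul_assoc, rho, rho, mul_div_cancel₀ _ (ne_of_gt hwm),
      mul_div_cancel₀ _ (ne_of_gt hwm)] at h3
    exact h3

/-- Regrouping: `∑ⱼ L(N_j)^{p+1} = ∑ᵢ w_{i,N(i)} · L(N_{N(i)})^p`. -/
lemma sum_regroup (p : ℕ) (N : Fin n → Fin m) :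
    ∑ j, load w N j ^ (p + 1) = ∑ i, w i (N i) * load w N (N i) ^ p := by
  rw [← Finset.sum_fiberwise Finset.univ N (fun i => w i (N i) * load w N (N i) ^ p)]
  refine Finset.sum_congr rfl fun j _ => ?_
  have : ∑ i ∈ Finset.univ.filter fun i => N i = j, w i (N i) * load w N (N i) ^ p
      = ∑ i ∈ Finset.univ.filter fun i => N i = j, w i j * load w N j ^ p := by
    refine Finset.sum_congr rfl fun i hi => ?_
    rw [Finset.mem_filter] at hi
    rw [hi.2]
  rw [this, ← Finset.sum_mul, ← load, pow_succ, mul_comm]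

/-- Regrouping on the `O` side. -/
lemma sum_regroup' (p : ℕ) (N O : Fin n → Fin m) (T : ℝ) :
    ∑ i, w i (O i) * (load w N (O i) + T) ^ p
      = ∑ j, load w O j * (load w N j + T) ^ p := by
  rw [← Finset.sum_fiberwise Finset.univ O (fun i => w i (O i) * (load w N (O i) + T) ^ p)]
  refine Finset.sum_congr rfl fun j _ => ?_
  have : ∑ i ∈ Finset.univ.filter fun i => O i = j, w i (O i) * (load w N (O i) + T) ^ p
      = ∑ i ∈ Finset.univ.filter fun i => O i = j, w i j * (load w N j + T) ^ p := by
    refine Finset.sum_congr rfl fun i hi => ?_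
    rw [Finset.mem_filter] at hi
    rw [hi.2]
  rw [this, ← Finset.sum_mul, ← load]


lemma scalar_key (p : ℕ) (hp : 1 ≤ p) (y : ℝ) (hy : 0 ≤ y)
    (h : y ^ (p + 1) ≤ (y + 1) ^ p) :
    y ≤ (2 * (p : ℝ) + 1) / Real.log ((p : ℝ) + 1) := by
  have hP : (1 : ℝ) ≤ (p : ℝ) := by exact_mod_cast hp
  have hlog : 0 < Real.log ((p : ℝ) + 1) := Real.log_pos (by linarith)
  set c : ℝ := (2 * (p : ℝ) + 1) / Real.log ((p : ℝ) + 1) with hc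
  have hs2 : Real.sqrt ((p : ℝ) + 1) ^ 2 = (p : ℝ) + 1 := Real.sq_sqrt (by linarith)
  have hs1 : (1 : ℝ) ≤ Real.sqrt ((p : ℝ) + 1) := by
    nlinarith [Real.sqrt_nonneg ((p : ℝ) + 1), hs2, hP]
  have hsqrtc : Real.sqrt ((p : ℝ) + 1) ≤ c := by
    rw [hc, le_div_iff₀ hlog]
    have h1 : Real.log (Real.sqrt ((p : ℝ) + 1)) ≤ Real.sqrt ((p : ℝ) + 1) - 1 :=
      Real.log_le_sub_one_of_pos (by linarith)
    have h2 : Real.log ((p : ℝ) + 1) = 2 * Real.log (Real.sqrt ((p : ℝ) + 1)) := by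
      rw [Real.log_sqrt (by linarith)]; ring
    nlinarith [hs1, hs2]
  have hc1 : (1 : ℝ) < c := by
    have : (1:ℝ) < Real.sqrt ((p : ℝ) + 1) := by
      nlinarith [hs1, hs2]
    linarith
  by_contra hyc
  push_neg at hyc
  have hy1 : (1 : ℝ) < y := hc1.trans hyc
  -- upper bound : y * log y ≤ p
  have hup : y * Real.log y ≤ (p : ℝ) := by
    have hl := Real.log_le_log (pow_pos (by linarith : (0:ℝ) < y) (p+1)) h
    rw [Real.log_pow, Real.log_pow] at hl
    push_cast at hl
    have h5 : Real.log (y + 1) ≤ Real.log y + 1 / y := by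
      have h6 := Real.log_le_sub_one_of_pos (x := (y + 1) / y) (by positivity)
      rw [Real.log_div (by linarith) (by linarith)] at h6
      have : (y + 1) / y - 1 = 1 / y := by field_simp; ring
      linarith
    -- (p+1) log y ≤ p log(y+1) ≤ p log y + p/y
    have h5p : (p : ℝ) * Real.log (y + 1) ≤ (p : ℝ) * (Real.log y + 1 / y) :=
      mul_le_mul_of_nonneg_left h5 (by linarith)
    have h7 : Real.log y ≤ (p : ℝ) / y := by
      rw [div_eq_mul_one_div]; linarith
    have h8 : y * Real.log y ≤ y * ((p : ℝ) / y) :=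
      mul_le_mul_of_nonneg_left h7 (by linarith)
    rw [mul_div_cancel₀] at h8
    · exact h8
    · linarith
  -- lower bound : y * log y > p
  have hlogc : Real.log ((p : ℝ) + 1) / 2 ≤ Real.log c := by
    rw [← Real.log_sqrt (by linarith)]
    exact Real.log_le_log (by positivity) hsqrtc
  have hclogc : ((p : ℝ)) + 1/2 ≤ c * Real.log c := by
    have : c * (Real.log ((p : ℝ) + 1) / 2) = ((2 * (p : ℝ) + 1)) / 2 := by
      rw [hc]; field_simp
    nlinarith [hlogc, hc1]
  have hlow : c * Real.log c ≤ y * Real.log y := by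
    have hlc : 0 ≤ Real.log c := Real.log_nonneg (by linarith)
    have : Real.log c ≤ Real.log y := Real.log_le_log (by linarith) (by linarith)
    nlinarith
  linarith

end helpers

theorem stmt_14 (n m : ℕ) (p : ℕ) (hp : 1 ≤ p) (hm : 0 < m)
    (w : Fin n → Fin m → ℝ) (hw : ∀ i j, 0 < w i j)
    (N O : Fin n → Fin m) (hN : isNashB p w N) :
    (∑ j, load w N j ^ (p + 1)) ^ ((1 : ℝ) / (p + 1)) ≤
      ((2 * p + 1) / Real.log (p + 1)) * (m : ℝ) ^ ((1 : ℝ) / (p + 1)) *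
        Finset.univ.sup' ⟨⟨0, hm⟩, Finset.mem_univ _⟩ (load w O) := by
  have hP1 : (1 : ℝ) ≤ (p : ℝ) := by exact_mod_cast hp
  have hPpos : (0 : ℝ) < (p : ℝ) + 1 := by linarith
  have hlogpos : 0 < Real.log ((p : ℝ) + 1) := Real.log_pos (by linarith)
  set T : ℝ := Finset.univ.sup' ⟨⟨0, hm⟩, Finset.mem_univ _⟩ (load w O) with hT
  have hL := load_nonneg hw N
  have hLO := load_nonneg hw O
  have hTnn : 0 ≤ T := le_trans (hLO ⟨0, hm⟩) (Finset.le_sup' _ (Finset.mem_univ _))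
  have hloadT : ∀ j, load w O j ≤ T := fun j => Finset.le_sup' _ (Finset.mem_univ j)
  rcases Nat.eq_zero_or_pos n with hn | hn
  · -- trivial case: no jobs
    subst hn
    have hz : ∀ j : Fin m, load w N j = 0 := by
      intro j
      simp [load]
    have : (∑ j, load w N j ^ (p + 1)) = 0 := by
      simp [hz]
    rw [this, Real.zero_rpow (by positivity)]
    positivity
  · -- main case
    have hwT : ∀ i : Fin n, w i (O i) ≤ T := by
      intro i
      refine le_trans ?_ (hloadT (O i))
      refine Finset.single_le_sum (f := fun i' => w i' (O i)) (fun i' _ => (hw i' (O i)).le) ?_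
      simp
    have hTpos : 0 < T := lt_of_lt_of_le (hw ⟨0, hn⟩ (O ⟨0, hn⟩)) (hwT ⟨0, hn⟩)
    -- Step 1: the key inequality S ≤ T * ∑ (L j + T)^p
    set F : Fin m → ℝ := fun j => load w N j + T with hF
    have hF0 : ∀ j, 0 ≤ F j := fun j => by have := hL j; simp [hF]; linarith
    set S : ℝ := ∑ j, load w N j ^ (p + 1) with hSdef
    have hS0 : 0 ≤ S := Finset.sum_nonneg fun j _ => pow_nonneg (hL j) _
    have h2 : S ≤ T * ∑ j, F j ^ p := by
      calc S = ∑ i, w i (N i) * load w N (N i) ^ p := sum_regroup p N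
        _ ≤ ∑ i, w i (O i) * (load w N (O i) + w i (O i)) ^ p :=
            Finset.sum_le_sum fun i _ => key_job p hp hm hw hN i (O i)
        _ ≤ ∑ i, w i (O i) * (load w N (O i) + T) ^ p := by
            refine Finset.sum_le_sum fun i _ => mul_le_mul_of_nonneg_left ?_ (hw i (O i)).le
            refine pow_le_pow_left₀ (by linarith [hL (O i), (hw i (O i)).le]) ?_ p
            linarith [hwT i]
        _ = ∑ j, load w O j * F j ^ p := sum_regroup' p N O T
        _ ≤ ∑ j, T * F j ^ p :=
            Finset.sum_le_sum fun j _ =>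
              mul_le_mul_of_nonneg_right (hloadT j) (pow_nonneg (hF0 j) p)
        _ = T * ∑ j, F j ^ p := by rw [Finset.mul_sum]
    -- abbreviations
    set κ : ℝ := (1 : ℝ) / ((p : ℝ) + 1) with hκ
    have hκpos : 0 < κ := by rw [hκ]; positivity
    set Λ : ℝ := S ^ κ with hΛ
    have hΛ0 : 0 ≤ Λ := Real.rpow_nonneg hS0 κ
    have hΛpow : Λ ^ (p + 1) = S := by
      rw [hΛ, ← Real.rpow_natCast (S ^ κ) (p + 1), ← Real.rpow_mul hS0, hκ]
      push_cast
      rw [one_div, inv_mul_cancel₀ (by positivity), Real.rpow_one]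
    set B : ℝ := (m : ℝ) ^ κ * T with hB
    have hBpos : 0 < B := by
      rw [hB]
      exact mul_pos (Real.rpow_pos_of_pos (by exact_mod_cast hm) κ) hTpos
    -- Step 2: Hölder
    have hconv : ∀ j, (F j ^ p : ℝ) ^ (((p : ℝ) + 1) / (p : ℝ)) = F j ^ (p + 1) := by
      intro j
      rw [← Real.rpow_natCast (F j) p, ← Real.rpow_mul (hF0 j)]
      rw [show (p : ℝ) * (((p : ℝ) + 1) / (p : ℝ)) = (p : ℝ) + 1 by
        field_simp]
      rw [show ((p : ℝ) + 1) = ((p + 1 : ℕ) : ℝ) by push_cast; ring, Real.rpow_natCast]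
    have h3 : ∑ j, F j ^ p ≤ (m : ℝ) ^ κ * (∑ j, F j ^ (p + 1)) ^ ((p : ℝ) / ((p : ℝ) + 1)) := by
      have hhold := Real.inner_le_weight_mul_Lp_of_nonneg (ι := Fin m) Finset.univ
        (p := ((p : ℝ) + 1) / (p : ℝ)) (by rw [le_div_iff₀ (by positivity)]; linarith)
        (fun _ => 1) (fun j => F j ^ p) (fun _ => zero_le_one)
        (fun j => pow_nonneg (hF0 j) p)
      simp only [one_mul] at hhold
      have hinv : (((p : ℝ) + 1) / (p : ℝ))⁻¹ = (p : ℝ) / ((p : ℝ) + 1) := by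
        rw [inv_div]
      rw [hinv] at hhold
      have hcard : (∑ _j : Fin m, (1 : ℝ)) = (m : ℝ) := by simp
      rw [hcard] at hhold
      have hexp : 1 - (p : ℝ) / ((p : ℝ) + 1) = κ := by
        rw [hκ]; field_simp; ring
      rw [hexp] at hhold
      calc ∑ j, F j ^ p ≤ (m : ℝ) ^ κ * (∑ j, (F j ^ p : ℝ) ^ (((p : ℝ) + 1) / (p : ℝ))) ^
            ((p : ℝ) / ((p : ℝ) + 1)) := hhold
        _ = (m : ℝ) ^ κ * (∑ j, F j ^ (p + 1)) ^ ((p : ℝ) / ((p : ℝ) + 1)) := by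
            congr 2
            exact Finset.sum_congr rfl fun j _ => hconv j
    -- Step 3: Minkowski
    have hnp : ∀ (x : ℝ), 0 ≤ x → x ^ ((p : ℝ) + 1) = x ^ (p + 1) := by
      intro x hx
      rw [show ((p : ℝ) + 1) = ((p + 1 : ℕ) : ℝ) by push_cast; ring, Real.rpow_natCast]
    have h4 : (∑ j, F j ^ (p + 1)) ^ κ ≤ Λ + B := by
      have hmink := Real.Lp_add_le_of_nonneg (s := (Finset.univ : Finset (Fin m)))
        (f := load w N) (g := fun _ => T) (p := (p : ℝ) + 1) (by linarith)
        (fun j _ => hL j) (fun _ _ => hTnn)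
      have e1 : ∑ j, (load w N j + T) ^ ((p : ℝ) + 1) = ∑ j, F j ^ (p + 1) :=
        Finset.sum_congr rfl fun j _ => by rw [hnp _ (hF0 j)]
      have e2 : ∑ j, load w N j ^ ((p : ℝ) + 1) = S :=
        Finset.sum_congr rfl fun j _ => by rw [hnp _ (hL j)]
      have e3 : (∑ _j : Fin m, T ^ ((p : ℝ) + 1)) ^ ((1:ℝ) / ((p : ℝ) + 1)) = (m : ℝ) ^ κ * T := by
        rw [Finset.sum_const, Finset.card_univ, Fintype.card_fin, nsmul_eq_mul,
          Real.mul_rpow (by positivity) (Real.rpow_nonneg hTnn _),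
          ← Real.rpow_mul hTnn,
          show ((p : ℝ) + 1) * ((1:ℝ) / ((p : ℝ) + 1)) = 1 by field_simp,
          Real.rpow_one, hκ]
      rw [e1, e2, e3] at hmink
      calc (∑ j, F j ^ (p + 1)) ^ κ = (∑ j, F j ^ (p + 1)) ^ ((1:ℝ) / ((p : ℝ) + 1)) := by
            rw [hκ]
        _ ≤ S ^ ((1:ℝ) / ((p : ℝ) + 1)) + (m : ℝ) ^ κ * T := hmink
        _ = Λ + B := by rw [hΛ, hB, hκ]
    -- combine: Λ ^ (p+1) ≤ B * (Λ + B) ^ p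
    have h5 : (∑ j, F j ^ (p + 1)) ^ ((p : ℝ) / ((p : ℝ) + 1)) ≤ (Λ + B) ^ p := by
      have hbase : 0 ≤ ∑ j, F j ^ (p + 1) :=
        Finset.sum_nonneg fun j _ => pow_nonneg (hF0 j) _
      have := Real.rpow_le_rpow (Real.rpow_nonneg hbase κ) h4 (by positivity : (0:ℝ) ≤ (p : ℝ))
      rw [← Real.rpow_mul hbase] at this
      rw [show κ * (p : ℝ) = (p : ℝ) / ((p : ℝ) + 1) by rw [hκ]; field_simp] at this
      calc (∑ j, F j ^ (p + 1)) ^ ((p : ℝ) / ((p : ℝ) + 1)) ≤ (Λ + B) ^ ((p : ℝ)) := this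
        _ = (Λ + B) ^ p := Real.rpow_natCast _ p
    have hSB : Λ ^ (p + 1) ≤ B * (Λ + B) ^ p := by
      rw [hΛpow]
      calc S ≤ T * ∑ j, F j ^ p := h2
        _ ≤ T * ((m : ℝ) ^ κ * (∑ j, F j ^ (p + 1)) ^ ((p : ℝ) / ((p : ℝ) + 1))) :=
            mul_le_mul_of_nonneg_left h3 hTnn
        _ ≤ T * ((m : ℝ) ^ κ * (Λ + B) ^ p) := by
            refine mul_le_mul_of_nonneg_left ?_ hTnn
            exact mul_le_mul_of_nonneg_left h5 (Real.rpow_nonneg (by positivity) κ)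
        _ = B * (Λ + B) ^ p := by rw [hB]; ring
    -- scalar analysis
    set y : ℝ := Λ / B with hy
    have hy0 : 0 ≤ y := div_nonneg hΛ0 hBpos.le
    have hykey : y ^ (p + 1) ≤ (y + 1) ^ p := by
      have hee : y + 1 = (Λ + B) / B := by rw [hy]; field_simp
      rw [hy, hee, div_pow, div_pow, div_le_div_iff₀ (by positivity) (by positivity)]
      calc Λ ^ (p + 1) * B ^ p ≤ (B * (Λ + B) ^ p) * B ^ p :=
            mul_le_mul_of_nonneg_right hSB (pow_nonneg hBpos.le p)
        _ = (Λ + B) ^ p * B ^ (p + 1) := by ring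
    have hfin := scalar_key p hp y hy0 hykey
    rw [hy, div_le_iff₀ hBpos] at hfin
    -- conclude
    calc S ^ ((1:ℝ) / ((p:ℝ) + 1)) = Λ := by rw [hΛ, hκ]
      _ ≤ (2 * (p : ℝ) + 1) / Real.log ((p : ℝ) + 1) * B := hfin
      _ = (2 * (p : ℝ) + 1) / Real.log ((p : ℝ) + 1) * (m : ℝ) ^ ((1:ℝ) / ((p:ℝ) + 1)) * T := by
          rw [hB, hκ]; ring
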